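/- arXiv:2010.14178 — 2 statements merged into one kernel-verified Lean document; each statement's English description precedes it below -/
import Mathlib

section
/- Let μ' and ν' be probability measures on ℝ^d, let π be a coupling of μ' and ν', and let δ > 0. Let a, b : ℝ^d → ℝ^d be measurable maps and g : ℝ^d → [0, ∞) be a measurable function with ∫g dμ' < ∞, ∫g dν' < ∞, ∫‖a−b‖ dν' < ∞, such that ‖a(x) − a(y)‖ ≤ (g(x) + g(y))·‖x − y‖ for π-almost every (x, y). Then ∫ ⟨x − y, a(x) − b(y)⟩ / (‖x − y‖² + δ²) dπ(x,y) ≤ ∫g dμ' + ∫g dν' + (1/δ)·∫‖a − b‖ dν'. -/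
open MeasureTheory

noncomputable section

/-- `ℝ^d` as a Euclidean space. -/
abbrev Euc (d : ℕ) : Type := EuclideanSpace ℝ (Fin d)

/-- `P` is a coupling of `μ` and `ν`: its marginals are `μ` and `ν`. -/
def IsCoupling {d : ℕ} (P : Measure (Euc d × Euc d)) (μ ν : Measure (Euc d)) : Prop :=
  P.map Prod.fst = μ ∧ P.map Prod.snd = ν

theorem drift_term_bound {d : ℕ} (μ' ν' : Measure (Euc d))
    [IsProbabilityMeasure μ'] [IsProbabilityMeasure ν']
    (P : Measure (Euc d × Euc d)) (hP : IsCoupling P μ' ν') [IsProbabilityMeasure P]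
    (δ : ℝ) (hδ : 0 < δ)
    (a b : Euc d → Euc d) (ha : Measurable a) (hb : Measurable b)
    (g : Euc d → ℝ) (hg : Measurable g) (hg0 : ∀ x, 0 ≤ g x)
    (hgμ : Integrable g μ') (hgν : Integrable g ν')
    (hab : Integrable (fun x => ‖a x - b x‖) ν')
    (hLip : ∀ᵐ p ∂P, ‖a p.1 - a p.2‖ ≤ (g p.1 + g p.2) * ‖p.1 - p.2‖) :
    (∫ p : Euc d × Euc d,
        (inner ℝ (p.1 - p.2) (a p.1 - b p.2) : ℝ) / (‖p.1 - p.2‖ ^ 2 + δ ^ 2) ∂P) ≤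
      (∫ x, g x ∂μ') + (∫ x, g x ∂ν') + (1 / δ) * ∫ x, ‖a x - b x‖ ∂ν' := by
  set f : Euc d × Euc d → ℝ := fun p =>
    (inner ℝ (p.1 - p.2) (a p.1 - b p.2) : ℝ) / (‖p.1 - p.2‖ ^ 2 + δ ^ 2) with hf
  set h : Euc d × Euc d → ℝ := fun p => g p.1 + g p.2 + (1 / δ) * ‖a p.2 - b p.2‖ with hh
  -- integrability of the pieces of h
  have h1 : Integrable (fun p : Euc d × Euc d => g p.1) P := by
    have := (integrable_map_measure hg.aestronglyMeasurable measurable_fst.aemeasurable).mp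
      (hP.1 ▸ hgμ)
    exact this
  have h2 : Integrable (fun p : Euc d × Euc d => g p.2) P := by
    exact (integrable_map_measure hg.aestronglyMeasurable measurable_snd.aemeasurable).mp
      (hP.2 ▸ hgν)
  have h3 : Integrable (fun p : Euc d × Euc d => ‖a p.2 - b p.2‖) P := by
    exact (integrable_map_measure ((ha.sub hb).norm).aestronglyMeasurable
      measurable_snd.aemeasurable).mp (hP.2 ▸ hab)
  have hInt : Integrable h P := (h1.add h2).add (h3.const_mul _)
  -- a.e. bound ‖f p‖ ≤ h p
  have hbound : ∀ᵐ p ∂P, ‖f p‖ ≤ h p := by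
    filter_upwards [hLip] with p hp
    set t := ‖p.1 - p.2‖ with ht
    have ht0 : 0 ≤ t := norm_nonneg _
    have hden : 0 < t ^ 2 + δ ^ 2 := by positivity
    have hinner : |(inner ℝ (p.1 - p.2) (a p.1 - b p.2) : ℝ)| ≤ t * ‖a p.1 - b p.2‖ :=
      abs_real_inner_le_norm _ _
    have htri : ‖a p.1 - b p.2‖ ≤ ‖a p.1 - a p.2‖ + ‖a p.2 - b p.2‖ :=
      norm_sub_le_norm_sub_add_norm_sub _ _ _
    have key : |(inner ℝ (p.1 - p.2) (a p.1 - b p.2) : ℝ)| ≤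
        (g p.1 + g p.2) * t ^ 2 + t * ‖a p.2 - b p.2‖ := by
      calc |(inner ℝ (p.1 - p.2) (a p.1 - b p.2) : ℝ)| ≤ t * ‖a p.1 - b p.2‖ := hinner
        _ ≤ t * (‖a p.1 - a p.2‖ + ‖a p.2 - b p.2‖) := by
            exact mul_le_mul_of_nonneg_left htri ht0
        _ ≤ t * ((g p.1 + g p.2) * t + ‖a p.2 - b p.2‖) := by
            gcongr
        _ = (g p.1 + g p.2) * t ^ 2 + t * ‖a p.2 - b p.2‖ := by ring
    have hg12 : 0 ≤ g p.1 + g p.2 := add_nonneg (hg0 _) (hg0 _)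
    have hfrac1 : (g p.1 + g p.2) * t ^ 2 / (t ^ 2 + δ ^ 2) ≤ g p.1 + g p.2 := by
      rw [div_le_iff₀ hden]
      nlinarith [sq_nonneg δ]
    have hfrac2 : t * ‖a p.2 - b p.2‖ / (t ^ 2 + δ ^ 2) ≤ (1 / δ) * ‖a p.2 - b p.2‖ := by
      rw [div_le_iff₀ hden]
      have hnn : 0 ≤ ‖a p.2 - b p.2‖ := norm_nonneg _
      have h2δ : t * δ ≤ t ^ 2 + δ ^ 2 := by nlinarith [sq_nonneg (t - δ)]
      calc t * ‖a p.2 - b p.2‖ = (t * δ) * ‖a p.2 - b p.2‖ / δ := by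
            field_simp
        _ ≤ (t ^ 2 + δ ^ 2) * ‖a p.2 - b p.2‖ / δ := by
            gcongr
        _ = 1 / δ * ‖a p.2 - b p.2‖ * (t ^ 2 + δ ^ 2) := by ring
    have : ‖f p‖ = |(inner ℝ (p.1 - p.2) (a p.1 - b p.2) : ℝ)| / (t ^ 2 + δ ^ 2) := by
      rw [hf]
      simp only [Real.norm_eq_abs, abs_div, ← ht, abs_of_pos hden]
    rw [this, hh]
    calc |(inner ℝ (p.1 - p.2) (a p.1 - b p.2) : ℝ)| / (t ^ 2 + δ ^ 2)
        ≤ ((g p.1 + g p.2) * t ^ 2 + t * ‖a p.2 - b p.2‖) / (t ^ 2 + δ ^ 2) := by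
          gcongr
      _ = (g p.1 + g p.2) * t ^ 2 / (t ^ 2 + δ ^ 2) +
            t * ‖a p.2 - b p.2‖ / (t ^ 2 + δ ^ 2) := by ring
      _ ≤ (g p.1 + g p.2) + (1 / δ) * ‖a p.2 - b p.2‖ := add_le_add hfrac1 hfrac2
  -- f measurable
  have hfmeas : AEStronglyMeasurable f P := by
    apply Measurable.aestronglyMeasurable
    apply Measurable.div
    · exact Measurable.inner (measurable_fst.sub measurable_snd)
        ((ha.comp measurable_fst).sub (hb.comp measurable_snd))
    · exact ((measurable_fst.sub measurable_snd).norm.pow_const 2).add measurable_const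
  have hfInt : Integrable f P := hInt.mono' hfmeas hbound
  have step1 : ∫ p, f p ∂P ≤ ∫ p, h p ∂P := by
    calc ∫ p, f p ∂P ≤ ‖∫ p, f p ∂P‖ := le_abs_self _
      _ ≤ ∫ p, ‖f p‖ ∂P := norm_integral_le_integral_norm _
      _ ≤ ∫ p, h p ∂P := integral_mono_ae hfInt.norm hInt hbound
  have step2 : ∫ p, h p ∂P =
      (∫ x, g x ∂μ') + (∫ x, g x ∂ν') + (1 / δ) * ∫ x, ‖a x - b x‖ ∂ν' := by
    have h12 : Integrable (fun p : Euc d × Euc d => g p.1 + g p.2) P := h1.add h2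
    rw [hh]
    rw [integral_add h12 (h3.const_mul _), integral_add h1 h2,
      integral_const_mul]
    congr 1
    · congr 1
      · rw [← hP.1, integral_map measurable_fst.aemeasurable hg.aestronglyMeasurable]
      · rw [← hP.2, integral_map measurable_snd.aemeasurable hg.aestronglyMeasurable]
    · rw [← hP.2, integral_map (f := fun x => ‖a x - b x‖) measurable_snd.aemeasurable
        ((ha.sub hb).norm).aestronglyMeasurable]
  exact step1.trans_eq step2


end
end

section
/- Let μ' and ν' be probability measures on ℝ^d, let π be a coupling of μ' and ν', and let δ > 0. Let S, T : ℝ^d → M_d(ℝ) be measurable matrix-valued maps and g : ℝ^d → [0, ∞) a measurable function such that ‖S(x) − S(y)‖_{HS} ≤ (g(x) + g(y))·‖x − y‖ for π-almost every (x, y). Then ∫ ‖S(x) − T(y)‖²_{HS} / (‖x − y‖² + δ²) dπ(x,y) ≤ 4·∫g² dμ' + 4·∫g² dν' + (2/δ²)·∫‖S − T‖²_{HS} dν'. -/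
open MeasureTheory

noncomputable section

/-- The Hilbert–Schmidt (Frobenius) norm of a `d × d` real matrix. -/
def HSnorm {d : ℕ} (A : Matrix (Fin d) (Fin d) ℝ) : ℝ :=
  Real.sqrt (∑ i, ∑ j, (A i j) ^ 2)

lemma HSnorm_eq {d : ℕ} (A : Matrix (Fin d) (Fin d) ℝ) :
    HSnorm A = ‖(WithLp.equiv 2 ((Fin d × Fin d) → ℝ)).symm (fun ij => A ij.1 ij.2)‖ := by
  rw [EuclideanSpace.norm_eq, HSnorm, Fintype.sum_prod_type]
  simp [Real.norm_eq_abs, sq_abs]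

lemma HSnorm_nonneg {d : ℕ} (A : Matrix (Fin d) (Fin d) ℝ) : 0 ≤ HSnorm A := by
  rw [HSnorm_eq]; positivity

lemma HSnorm_tri {d : ℕ} (A B C : Matrix (Fin d) (Fin d) ℝ) :
    HSnorm (A - C) ≤ HSnorm (A - B) + HSnorm (B - C) := by
  simp only [HSnorm_eq]
  have : (WithLp.equiv 2 ((Fin d × Fin d) → ℝ)).symm (fun ij => (A - C) ij.1 ij.2)
      = (WithLp.equiv 2 ((Fin d × Fin d) → ℝ)).symm (fun ij => (A - B) ij.1 ij.2)
        + (WithLp.equiv 2 ((Fin d × Fin d) → ℝ)).symm (fun ij => (B - C) ij.1 ij.2) := by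
    ext ij; simp [Matrix.sub_apply]
  rw [this]; exact norm_add_le _ _

theorem diffusion_term_bound {d : ℕ} (μ' ν' : Measure (Euc d))
    [IsProbabilityMeasure μ'] [IsProbabilityMeasure ν']
    (P : Measure (Euc d × Euc d)) (hP : IsCoupling P μ' ν') [IsProbabilityMeasure P]
    (δ : ℝ) (hδ : 0 < δ)
    (S T : Euc d → Matrix (Fin d) (Fin d) ℝ) (hS : ∀ i j, Measurable fun x => S x i j) (hT : ∀ i j, Measurable fun x => T x i j)
    (g : Euc d → ℝ) (hg : Measurable g) (hg0 : ∀ x, 0 ≤ g x)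
    (hgμ : Integrable (fun x => g x ^ 2) μ') (hgν : Integrable (fun x => g x ^ 2) ν')
    (hST : Integrable (fun x => HSnorm (S x - T x) ^ 2) ν')
    (hLip : ∀ᵐ p ∂P, HSnorm (S p.1 - S p.2) ≤ (g p.1 + g p.2) * ‖p.1 - p.2‖) :
    (∫ p : Euc d × Euc d,
        HSnorm (S p.1 - T p.2) ^ 2 / (‖p.1 - p.2‖ ^ 2 + δ ^ 2) ∂P) ≤
      4 * (∫ x, g x ^ 2 ∂μ') + 4 * (∫ x, g x ^ 2 ∂ν') +
        (2 / δ ^ 2) * ∫ x, HSnorm (S x - T x) ^ 2 ∂ν' := by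
  -- the dominating function
  set F : Euc d × Euc d → ℝ :=
    fun p => 4 * g p.1 ^ 2 + 4 * g p.2 ^ 2 + (2 / δ ^ 2) * HSnorm (S p.2 - T p.2) ^ 2 with hF
  have hgm : AEStronglyMeasurable (fun x => g x ^ 2) μ' := (hg.pow_const 2).aestronglyMeasurable
  have hgm' : AEStronglyMeasurable (fun x => g x ^ 2) ν' := (hg.pow_const 2).aestronglyMeasurable
  have hSTm : Measurable (fun x => HSnorm (S x - T x) ^ 2) := by
    apply Measurable.pow_const
    unfold HSnorm
    exact (Finset.measurable_sum _ fun i _ => Finset.measurable_sum _ fun j _ =>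
      (((hS i j).sub (hT i j)).pow_const 2)).sqrt
  -- integrability of F
  have h1 : Integrable (fun p : Euc d × Euc d => g p.1 ^ 2) P := by
    rw [← hP.1] at hgμ
    exact (integrable_map_measure (hg.pow_const 2).aestronglyMeasurable
      measurable_fst.aemeasurable).mp hgμ
  have h2 : Integrable (fun p : Euc d × Euc d => g p.2 ^ 2) P := by
    rw [← hP.2] at hgν
    exact (integrable_map_measure (hg.pow_const 2).aestronglyMeasurable
      measurable_snd.aemeasurable).mp hgν
  have h3 : Integrable (fun p : Euc d × Euc d => HSnorm (S p.2 - T p.2) ^ 2) P := by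
    have := hST
    rw [← hP.2] at this
    exact (integrable_map_measure hSTm.aestronglyMeasurable
      measurable_snd.aemeasurable).mp this
  have hFint : Integrable F P := by
    exact ((h1.const_mul 4).add (h2.const_mul 4)).add (h3.const_mul (2 / δ ^ 2))
  -- pointwise bound
  have hbound : ∀ᵐ p ∂P,
      HSnorm (S p.1 - T p.2) ^ 2 / (‖p.1 - p.2‖ ^ 2 + δ ^ 2) ≤ F p := by
    filter_upwards [hLip] with p hp
    set a := HSnorm (S p.1 - T p.2)
    set b := HSnorm (S p.1 - S p.2)
    set c := HSnorm (S p.2 - T p.2)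
    set n := ‖p.1 - p.2‖
    have ha : 0 ≤ a := HSnorm_nonneg _
    have hb : 0 ≤ b := HSnorm_nonneg _
    have hc : 0 ≤ c := HSnorm_nonneg _
    have hn : 0 ≤ n := norm_nonneg _
    have htri : a ≤ b + c := HSnorm_tri _ _ _
    have hD : (0:ℝ) < n ^ 2 + δ ^ 2 := by positivity
    rw [div_le_iff₀ hD, hF]
    have h2c : 2 * c ^ 2 ≤ (2 / δ ^ 2) * c ^ 2 * (n ^ 2 + δ ^ 2) := by
      rw [div_mul_eq_mul_div, div_mul_eq_mul_div, le_div_iff₀ (by positivity)]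
      nlinarith [sq_nonneg n, sq_nonneg c]
    have hG : 0 ≤ g p.1 + g p.2 := by have := hg0 p.1; have := hg0 p.2; linarith
    have hbG : b ^ 2 ≤ (g p.1 + g p.2) ^ 2 * n ^ 2 := by
      have := mul_le_mul hp hp hb (by positivity)
      nlinarith [this]
    nlinarith [sq_nonneg (b - c), sq_nonneg (g p.1 - g p.2), sq_nonneg (g p.1 + g p.2),
      mul_nonneg (mul_nonneg (by norm_num : (0:ℝ) ≤ 4) (add_nonneg (sq_nonneg (g p.1)) (sq_nonneg (g p.2)))) (sq_nonneg δ),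
      htri, hbG, h2c, mul_le_mul_of_nonneg_right htri (add_nonneg hb hc)]
  -- measurability of LHS integrand
  have hLHSm : AEStronglyMeasurable
      (fun p : Euc d × Euc d => HSnorm (S p.1 - T p.2) ^ 2 / (‖p.1 - p.2‖ ^ 2 + δ ^ 2)) P := by
    apply Measurable.aestronglyMeasurable
    apply Measurable.div
    · apply Measurable.pow_const
      unfold HSnorm
      exact (Finset.measurable_sum _ fun i _ => Finset.measurable_sum _ fun j _ =>
        ((((hS i j).comp measurable_fst).sub ((hT i j).comp measurable_snd)).pow_const 2)).sqrt
    · exact ((measurable_fst.sub measurable_snd).norm.pow_const 2).add measurable_const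
  have hnonneg : 0 ≤ᵐ[P]
      (fun p : Euc d × Euc d => HSnorm (S p.1 - T p.2) ^ 2 / (‖p.1 - p.2‖ ^ 2 + δ ^ 2)) := by
    filter_upwards with p
    have := HSnorm_nonneg (S p.1 - T p.2)
    positivity
  have key : (∫ p : Euc d × Euc d,
      HSnorm (S p.1 - T p.2) ^ 2 / (‖p.1 - p.2‖ ^ 2 + δ ^ 2) ∂P) ≤ ∫ p, F p ∂P :=
    integral_mono_of_nonneg hnonneg hFint hbound
  refine key.trans ?_
  have e1 : ∫ p, F p ∂P = 4 * (∫ p : Euc d × Euc d, g p.1 ^ 2 ∂P)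
      + 4 * (∫ p : Euc d × Euc d, g p.2 ^ 2 ∂P)
      + (2 / δ ^ 2) * ∫ p : Euc d × Euc d, HSnorm (S p.2 - T p.2) ^ 2 ∂P := by
    have hA : Integrable (fun p : Euc d × Euc d => 4 * g p.1 ^ 2 + 4 * g p.2 ^ 2) P :=
      (h1.const_mul 4).add (h2.const_mul 4)
    have hC : Integrable (fun p : Euc d × Euc d => (2 / δ ^ 2) * HSnorm (S p.2 - T p.2) ^ 2) P :=
      h3.const_mul _
    simp only [hF]
    rw [integral_add hA hC, integral_add (h1.const_mul 4) (h2.const_mul 4), integral_const_mul,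
      integral_const_mul, integral_const_mul]
  have e2 : (∫ p : Euc d × Euc d, g p.1 ^ 2 ∂P) = ∫ x, g x ^ 2 ∂μ' := by
    rw [← hP.1, integral_map measurable_fst.aemeasurable (hg.pow_const 2).aestronglyMeasurable]
  have e3 : (∫ p : Euc d × Euc d, g p.2 ^ 2 ∂P) = ∫ x, g x ^ 2 ∂ν' := by
    rw [← hP.2, integral_map measurable_snd.aemeasurable (hg.pow_const 2).aestronglyMeasurable]
  have e4 : (∫ p : Euc d × Euc d, HSnorm (S p.2 - T p.2) ^ 2 ∂P)
      = ∫ x, HSnorm (S x - T x) ^ 2 ∂ν' := by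
    rw [← hP.2, integral_map measurable_snd.aemeasurable hSTm.aestronglyMeasurable]
  rw [e1, e2, e3, e4]

end
end
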